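/- Let d, m, n be positive integers with d > 1 and n = d·m. Then cot(π/d) belongs to the subfield ℚ(cot(π/n)) of ℝ generated over ℚ by cot(π/n); consequently ℚ(cot(π/d)) is a subfield of ℚ(cot(π/n)). -/

import Mathlib

open Real

lemma cot_add'' (a b : ℝ) (ha : sin a ≠ 0) (hb : sin b ≠ 0) (hab : sin (a+b) ≠ 0) :
    Real.cot (a+b) = (Real.cot a * Real.cot b - 1)/(Real.cot a + Real.cot b) := by
  have hab' : sin a * cos b + cos a * sin b ≠ 0 := by rwa [← Real.sin_add]
  have h2 : cos a * sin b + cos b * sin a ≠ 0 := by intro h; exact hab' (by linarith)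
  rw [Real.cot_eq_cos_div_sin, Real.cot_eq_cos_div_sin, Real.cot_eq_cos_div_sin,
    Real.sin_add, Real.cos_add]
  field_simp
  rw [mul_div_assoc, show cos a * sin b + cos b * sin a = cos b * sin a + cos a * sin b by ring,
    div_self (by intro h; exact hab' (by linarith)), mul_one]

/-- If `d > 1` and `n = d * m`, then `cot (π / d)` lies in `ℚ(cot (π / n))`;
consequently `ℚ(cot (π / d))` is a subfield of `ℚ(cot (π / n))`. -/
theorem cot_pi_div_mem_adjoin (d m n : ℕ) (hd : 0 < d) (hm : 0 < m) (hn : 0 < n)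
    (hd1 : 1 < d) (hdm : n = d * m) :
    Real.cot (Real.pi / (d : ℝ)) ∈
        IntermediateField.adjoin ℚ {Real.cot (Real.pi / (n : ℝ))} ∧
      IntermediateField.adjoin ℚ {Real.cot (Real.pi / (d : ℝ))} ≤
        IntermediateField.adjoin ℚ {Real.cot (Real.pi / (n : ℝ))} := by
  set x : ℝ := Real.pi / n with hxdef
  set K := IntermediateField.adjoin ℚ {Real.cot x} with hK
  have hnpos : (0:ℝ) < n := by exact_mod_cast hn
  have hxpos : 0 < x := div_pos Real.pi_pos hnpos
  have hmn : m < n := by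
    rw [hdm]; nlinarith
  have hsin : ∀ k : ℕ, 1 ≤ k → k ≤ m → Real.sin ((k : ℝ) * x) ≠ 0 := by
    intro k hk1 hk2
    refine ne_of_gt (Real.sin_pos_of_pos_of_lt_pi ?_ ?_)
    · have : (1:ℝ) ≤ (k:ℝ) := by exact_mod_cast hk1
      nlinarith
    · have hkn : (k:ℝ) < n := by exact_mod_cast lt_of_le_of_lt hk2 hmn
      rw [hxdef]
      rw [mul_div_assoc']
      rw [div_lt_iff₀ hnpos]
      nlinarith [Real.pi_pos]
  have hx1 : Real.cot x ∈ K := IntermediateField.mem_adjoin_simple_self ℚ _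
  have main : ∀ k : ℕ, 1 ≤ k → k ≤ m → Real.cot ((k : ℝ) * x) ∈ K := by
    intro k
    induction k with
    | zero => omega
    | succ k ih =>
      intro _ hk2
      rcases Nat.eq_zero_or_pos k with hk0 | hkpos
      · subst hk0; simpa using hx1
      · have hkm : k ≤ m := le_trans (Nat.le_succ k) hk2
        have hkm' : k ≤ m := Nat.le_of_succ_le hk2
        have ihk := ih hkpos hkm'
        have heq : ((k + 1 : ℕ) : ℝ) * x = (k : ℝ) * x + x := by push_cast; ring
        have hsx : Real.sin x ≠ 0 := by
          simpa using hsin 1 le_rfl (le_trans hkpos hkm')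
        have hsk1 : Real.sin ((k:ℝ) * x + x) ≠ 0 :=
          heq ▸ hsin (k+1) (Nat.succ_le_succ (Nat.zero_le k)) hk2
        rw [heq, cot_add'' _ _ (hsin k hkpos hkm') hsx hsk1]
        · exact K.div_mem (K.sub_mem (K.mul_mem ihk hx1) K.one_mem) (K.add_mem ihk hx1)
  have hdx : Real.pi / (d : ℝ) = (m : ℝ) * x := by
    have hd0 : (d:ℝ) ≠ 0 := by positivity
    have hm0 : (m:ℝ) ≠ 0 := by positivity
    rw [hxdef]
    rw [hdm]
    push_cast
    field_simp
  have h1 : Real.cot (Real.pi / (d : ℝ)) ∈ K := by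
    rw [hdx]; exact main m hm le_rfl
  refine ⟨h1, ?_⟩
  rw [IntermediateField.adjoin_le_iff]
  simpa [Set.singleton_subset_iff] using h1
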